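/- Let q = 2^m with m ≥ 3 odd, and F = F_q. Define h: F → F by h(t) = t + (t+1)·(t/(t+1))^6 for t ≠ 1 and h(1) = 1. Then for t ≠ 1, h(t) = 1 + D_5(1/(t+1)) where D_5(x) = x + x^3 + x^5, and consequently h is a bijection of F with inverse h^{-1}(t) = (D_{1/5}(t+1))^{-1} + 1 for t ≠ 1, where D_{1/5} is the inverse of the Dickson permutation D_5. -/

import Mathlib

theorem payne_like_o_polynomial_inverse (m : ℕ) (hm : 3 ≤ m) (hmo : Odd m)
    (F : Type*) [Field F] [Fintype F] (hF : Fintype.card F = 2 ^ m)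
    (h D5 D5inv : F → F)
    (hdef : ∀ t : F, h t = t + (t + 1) * (t / (t + 1)) ^ 6)
    (hD5 : ∀ x : F, D5 x = x + x ^ 3 + x ^ 5)
    (hli : Function.LeftInverse D5inv D5)
    (hri : Function.RightInverse D5inv D5) :
    (∀ t : F, t ≠ 1 → h t = 1 + D5 ((t + 1)⁻¹)) ∧
    Function.Bijective h ∧
    (∀ t : F, t ≠ 1 → h ((D5inv (t + 1))⁻¹ + 1) = t) := by
  have hcard := FiniteField.cast_card_eq_zero F
  rw [hF] at hcard
  push_cast at hcard
  have h2 : (2 : F) = 0 := pow_eq_zero_iff (by omega : m ≠ 0) |>.mp hcard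
  -- key identity
  have key : ∀ t : F, t ≠ 1 → h t = 1 + D5 ((t + 1)⁻¹) := by
    intro t ht
    have hs : t + 1 ≠ 0 := fun hc => ht (by linear_combination hc - h2)
    rw [hdef, hD5, div_eq_mul_inv]
    field_simp
    linear_combination ((-2 : F) * t^0 + (-25 : F) * t^1 + (-146 : F) * t^2 +
      (-527 : F) * t^3 + (-1308 : F) * t^4 + (-2345 : F) * t^5 + (-3072 : F) * t^6 +
      (-2882 : F) * t^7 + (-1749 : F) * t^8 + (-341 : F) * t^9 + (572 : F) * t^10 +
      (757 : F) * t^11 + (514 : F) * t^12 + (228 : F) * t^13 + (67 : F) * t^14 +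
      (12 : F) * t^15 + (1 : F) * t^16 + (3:F)*t^5 + (3:F)*t^6 + (20*t + 140*t^2 + 525*t^3 + 1310*t^4 + 2344*t^5 + 3070*t^6 + 2882*t^7 + 1749*t^8 + 341*t^9 - 572*t^10 - 757*t^11 - 514*t^12 - 228*t^13 - 67*t^14 - 12*t^15 - t^16)) * h2
  -- h fixes 1
  have h1 : h 1 = 1 := by
    rw [hdef]
    have : (1 : F) + 1 = 0 := by linear_combination h2
    rw [this]
    simp
  have hD5inj : Function.Injective D5 := hli.injective
  have hD50 : D5 0 = 0 := by rw [hD5]; ring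
  -- third part
  have third : ∀ t : F, t ≠ 1 → h ((D5inv (t + 1))⁻¹ + 1) = t := by
    intro t ht
    have hs : t + 1 ≠ 0 := fun hc => ht (by linear_combination hc - h2)
    set y := D5inv (t + 1) with hy
    have hy0 : y ≠ 0 := by
      intro hc
      apply hs
      have := hri (t + 1)
      rw [← hy, hc, hD50] at this
      exact this.symm ▸ rfl
    have hu1 : y⁻¹ + 1 ≠ 1 := by
      intro hc
      exact hy0 (inv_eq_zero.mp (by linear_combination hc))
    rw [key _ hu1]
    have : y⁻¹ + 1 + 1 = y⁻¹ := by linear_combination h2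
    rw [this, inv_inv, hri (t + 1)]
    linear_combination h2
  -- injectivity, hence bijectivity
  have hinj : Function.Injective h := by
    intro a b hab
    by_cases ha : a = 1 <;> by_cases hb : b = 1
    · rw [ha, hb]
    · exfalso
      rw [ha, h1, key b hb] at hab
      have hsb : b + 1 ≠ 0 := fun hc => hb (by linear_combination hc - h2)
      have : D5 ((b + 1)⁻¹) = 0 := by linear_combination -hab
      have := hD5inj (this.trans hD50.symm)
      exact hsb (inv_eq_zero.mp this)
    · exfalso
      rw [hb, h1, key a ha] at hab
      have hsa : a + 1 ≠ 0 := fun hc => ha (by linear_combination hc - h2)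
      have : D5 ((a + 1)⁻¹) = 0 := by linear_combination hab
      have := hD5inj (this.trans hD50.symm)
      exact hsa (inv_eq_zero.mp this)
    · rw [key a ha, key b hb] at hab
      have : (a + 1)⁻¹ = (b + 1)⁻¹ := hD5inj (by linear_combination hab)
      have hsa : a + 1 ≠ 0 := fun hc => ha (by linear_combination hc - h2)
      have hsb : b + 1 ≠ 0 := fun hc => hb (by linear_combination hc - h2)
      have : a + 1 = b + 1 := by
        rw [← inv_inv (a + 1), this, inv_inv]
      linear_combination this
  exact ⟨key, Finite.injective_iff_bijective.mp hinj, third⟩
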